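/- Let G be a finite simple bipartite graph with edge weight function w : E(G) → ℕ and let b be a positive integer. Then the total weight of every greedy (first-fit) b-bounded edge coloring of G is at most (3 − 2/√b)·OPT, where OPT is the minimum total weight of a b-bounded proper edge coloring of G. -/

import Mathlib

open Finset

/-- `⌈a / b⌉` for natural numbers. -/
def natCeilDiv (a b : ℕ) : ℕ := (a + b - 1) / b

/-- `P` is the ordered `b`-partition of `S` (w.r.t. weights `w`): the blocks are pairwise
disjoint, cover `S`, each has at most `b` elements, earlier blocks consist of heavier
elements, and all blocks except possibly the last have exactly `b` elements. -/
def IsOrderedBPartition {β : Type*} [DecidableEq β] (w : β → ℕ) (b : ℕ) (S : Finset β)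
    {k : ℕ} (P : Fin k → Finset β) : Prop :=
  (∀ i j : Fin k, i ≠ j → Disjoint (P i) (P j)) ∧
  Finset.univ.biUnion P = S ∧
  (∀ i, (P i).card ≤ b) ∧
  (∀ i j : Fin k, i < j → ∀ x ∈ P i, ∀ y ∈ P j, w y ≤ w x) ∧
  (∀ i j : Fin k, i < j → (P i).card = b)

/-- A `b`-bounded proper vertex coloring of `G` with color classes `C i`:
a partition of the vertex set into independent sets, each of cardinality at most `b`. -/
def IsBddProperVC {α : Type*} (G : SimpleGraph α) (b : ℕ)
    {ι : Type*} (C : ι → Finset α) : Prop :=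
  (∀ v : α, ∃! i, v ∈ C i) ∧
  (∀ i, ∀ u ∈ C i, ∀ v ∈ C i, ¬ G.Adj u v) ∧
  (∀ i, (C i).card ≤ b)

/-- A proper edge coloring of `G` with color classes `C i`: a partition of the edge set
into matchings. -/
def IsProperEC {α : Type*} [Fintype α] [DecidableEq α] (G : SimpleGraph α) [DecidableRel G.Adj]
    {ι : Type*} (C : ι → Finset (Sym2 α)) : Prop :=
  (∀ e ∈ G.edgeFinset, ∃! i, e ∈ C i) ∧
  (∀ i, C i ⊆ G.edgeFinset) ∧
  (∀ i, ∀ e ∈ C i, ∀ f ∈ C i, e ≠ f → ¬ ∃ v, v ∈ e ∧ v ∈ f)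

/-- A `b`-bounded proper edge coloring: a proper edge coloring each of whose classes has
cardinality at most `b`. -/
def IsBddProperEC {α : Type*} [Fintype α] [DecidableEq α] (G : SimpleGraph α) [DecidableRel G.Adj]
    (b : ℕ) {ι : Type*} (C : ι → Finset (Sym2 α)) : Prop :=
  IsProperEC G C ∧ ∀ i, (C i).card ≤ b

/-- A nice `b`-bounded edge coloring: a sequence `C 0, …, C (k-1)` of (nonempty) pairwise
disjoint matchings of `G` covering `E(G)`, each of cardinality at most `b`, such that each
`C i` has cardinality exactly `b` or is a maximal matching of the subgraph of `G` with edge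
set `E(G) \ (C 0 ∪ … ∪ C (i-1))`. -/
def IsNiceBddEC {α : Type*} [Fintype α] [DecidableEq α] (G : SimpleGraph α) [DecidableRel G.Adj]
    (b : ℕ) {k : ℕ} (C : Fin k → Finset (Sym2 α)) : Prop :=
  IsBddProperEC G b C ∧
  (∀ i, (C i).Nonempty) ∧
  (∀ i : Fin k, (C i).card = b ∨
    ∀ e ∈ G.edgeFinset, (∀ j, j ≤ i → e ∉ C j) → ∃ f ∈ C i, ∃ v, v ∈ e ∧ v ∈ f)

/-- A greedy (first-fit) `b`-bounded edge coloring of `G`: a `b`-bounded proper edge coloring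
`C` together with an enumeration `e` of the edges in nonincreasing order of weight and a color
assignment `c` with `e j ∈ C (c j)`, such that each edge is placed in the first color that is
not full and contains no adjacent edge at the moment of placement. -/
def IsGreedyEC {α : Type*} [Fintype α] [DecidableEq α] (G : SimpleGraph α) [DecidableRel G.Adj]
    (w : Sym2 α → ℕ) (b : ℕ) {k m : ℕ} (C : Fin k → Finset (Sym2 α))
    (e : Fin m → Sym2 α) (c : Fin m → Fin k) : Prop :=
  IsBddProperEC G b C ∧
  Function.Injective e ∧
  (∀ f, f ∈ G.edgeFinset ↔ ∃ j, e j = f) ∧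
  (∀ j j' : Fin m, j ≤ j' → w (e j') ≤ w (e j)) ∧
  (∀ j, e j ∈ C (c j)) ∧
  (∀ j : Fin m, ∀ i : Fin k, i < c j →
    ((Finset.univ.filter fun l : Fin m => l < j ∧ c l = i)).card = b ∨
      ∃ l : Fin m, l < j ∧ c l = i ∧ e l ≠ e j ∧ ∃ v, v ∈ e l ∧ v ∈ e j)



section AuxGreedyEC

-- core real inequality, assuming a ≤ β
lemma aux_core (s t a β γ F : ℝ) (hs : 1 ≤ s) (ha : 0 ≤ a) (hγ : 0 ≤ γ) (hF : 0 ≤ F)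
    (haβ : a ≤ β)
    (hcap : F * (s*s) + (a + β + 2*γ + a*β + 1) ≤ t * (s*s))
    (h1 : a + γ + 1 ≤ t) (h2 : β + γ + 1 ≤ t) :
    (F + a + β + γ + 1) * (s * s) ≤ 3*t*(s*s) - 2*t*s := by
  rcases le_or_gt (2*t) (s*s+1) with hc | hc
  · nlinarith [mul_nonneg (by nlinarith : (0:ℝ) ≤ t - 1 - a) (by nlinarith : (0:ℝ) ≤ s*s - t - a),
      sq_nonneg (t - s), mul_nonneg (by nlinarith : (0:ℝ) ≤ t - β - γ - 1) (by nlinarith : (0:ℝ) ≤ s*s - 1),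
      mul_nonneg (sub_nonneg.2 haβ) ha]
  · nlinarith [sq_nonneg (2*a - s*s + 1), sq_nonneg ((s-1)*(s-1)),
      mul_nonneg (by nlinarith : (0:ℝ) ≤ 2*t - s*s - 1) (sq_nonneg (s-1)),
      mul_nonneg (by nlinarith : (0:ℝ) ≤ t - β - γ - 1) (by nlinarith : (0:ℝ) ≤ s*s - 1),
      mul_nonneg (sub_nonneg.2 haβ) ha, sq_nonneg (t-s)]

lemma aux_arith (b t a β γ F κ : ℕ) (hb : 1 ≤ b) (hκ : κ = F + a + β + γ + 1)
    (hcap : F * b + (a + β + 2*γ + a*β + 1) ≤ t * b)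
    (h1 : a + γ + 1 ≤ t) (h2 : β + γ + 1 ≤ t) :
    (κ : ℝ) ≤ (3 - 2 / Real.sqrt b) * t := by
  have hb0 : (0:ℝ) < b := by exact_mod_cast hb
  set s : ℝ := Real.sqrt b with hsdef
  have hss : s * s = (b:ℝ) := Real.mul_self_sqrt (by positivity)
  have hs1 : 1 ≤ s := by
    rw [hsdef, show (1:ℝ) = Real.sqrt 1 by simp]
    exact Real.sqrt_le_sqrt (by exact_mod_cast hb)
  have hs0 : 0 < s := lt_of_lt_of_le one_pos hs1
  have hcapR : (F:ℝ) * (s*s) + ((a:ℝ) + β + 2*γ + a*β + 1) ≤ t * (s*s) := by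
    rw [hss]; exact_mod_cast hcap
  have h1R : (a:ℝ) + γ + 1 ≤ t := by exact_mod_cast h1
  have h2R : (β:ℝ) + γ + 1 ≤ t := by exact_mod_cast h2
  have key : ((F:ℝ) + a + β + γ + 1) * (s*s) ≤ 3*t*(s*s) - 2*t*s := by
    rcases le_total (a:ℝ) (β:ℝ) with hab | hab
    · exact aux_core s t a β γ F hs1 (by positivity) (by positivity) (by positivity) hab hcapR h1R h2R
    · have := aux_core s t β a γ F hs1 (by positivity) (by positivity) (by positivity) hab
        (by nlinarith [hcapR]) h2R h1R
      nlinarith [this]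
  have hκR : (κ:ℝ) = (F:ℝ) + a + β + γ + 1 := by exact_mod_cast hκ
  rw [hκR]
  have h3 : (3 - 2 / s) * t = (3*t*(s*s) - 2*t*s) / (s*s) := by
    field_simp
  rw [h3, le_div_iff₀ (by positivity)]
  exact key


lemma aux_sum_levels {ι : Type*} [Fintype ι] [DecidableEq ι] (g : ι → ℕ) (M : ℕ)
    (hM : ∀ i, g i ≤ M) :
    ∑ i, g i = ∑ x ∈ Finset.Icc 1 M, (Finset.univ.filter fun i => x ≤ g i).card := by
  have h : ∀ x, (Finset.univ.filter fun i : ι => x ≤ g i).card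
      = ∑ i : ι, if x ≤ g i then 1 else 0 := by
    intro x; rw [Finset.card_filter]
  simp_rw [h]
  rw [Finset.sum_comm]
  apply Finset.sum_congr rfl
  intro i _
  rw [← Finset.card_filter]
  have : (Finset.Icc 1 M).filter (fun x => x ≤ g i) = Finset.Icc 1 (g i) := by
    ext y
    simp only [Finset.mem_filter, Finset.mem_Icc]
    have := hM i
    omega
  rw [this, Nat.card_Icc]; omega

lemma aux_pairs {n : ℕ} (A B : Finset (Fin n)) (hd : ∀ q ∈ A, q ∉ B) :
    (∑ q ∈ A, (B.filter (fun r => q < r)).card)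
      + ∑ r ∈ B, (A.filter (fun q => r < q)).card = A.card * B.card := by
  have h1 : ∀ q ∈ A, (B.filter (fun r => q < r)).card = ∑ r ∈ B, if q < r then 1 else 0 := by
    intro q _; rw [Finset.card_filter]
  have h2 : ∀ r ∈ B, (A.filter (fun q => r < q)).card = ∑ q ∈ A, if r < q then 1 else 0 := by
    intro r _; rw [Finset.card_filter]
  rw [Finset.sum_congr rfl h1, Finset.sum_congr rfl h2]
  have hsw : (∑ r ∈ B, ∑ q ∈ A, if r < q then 1 else 0)
      = ∑ q ∈ A, ∑ r ∈ B, if r < q then 1 else 0 := Finset.sum_comm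
  rw [hsw, ← Finset.sum_add_distrib]
  have : ∀ q ∈ A, ((∑ r ∈ B, if q < r then 1 else 0) + ∑ r ∈ B, if r < q then 1 else 0) = B.card := by
    intro q hq
    rw [← Finset.sum_add_distrib, Finset.card_eq_sum_ones]
    apply Finset.sum_congr rfl
    intro r hr
    have hne : q ≠ r := fun h => hd q hq (h ▸ hr)
    rcases lt_trichotomy q r with h | h | h
    · simp [h, lt_asymm h]
    · exact absurd h hne
    · simp [h, lt_asymm h]
  rw [Finset.sum_congr rfl this, Finset.sum_const, smul_eq_mul]


lemma aux_cross {α : Type*} [Fintype α] [DecidableEq α] (G : SimpleGraph α) [DecidableRel G.Adj]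
    (U : Set α) (hbip : ∀ u v : α, G.Adj u v → (u ∈ U ↔ v ∉ U))
    (w : Sym2 α → ℕ) (b : ℕ)
    {k m : ℕ} (C : Fin k → Finset (Sym2 α)) (e : Fin m → Sym2 α) (c : Fin m → Fin k)
    (heinj : Function.Injective e)
    (hsub : ∀ i, C i ⊆ G.edgeFinset)
    (hmono : ∀ j j' : Fin m, j ≤ j' → w (e j') ≤ w (e j))
    (hmemC : ∀ j, e j ∈ C (c j))
    (hgre : ∀ j : Fin m, ∀ i : Fin k, i < c j →
      ((Finset.univ.filter fun l : Fin m => l < j ∧ c l = i)).card = b ∨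
        ∃ l : Fin m, l < j ∧ c l = i ∧ e l ≠ e j ∧ ∃ v, v ∈ e l ∧ v ∈ e j)
    (hcard : ∀ i, (C i).card ≤ b)
    (hdisjC : ∀ {i i' : Fin k} {g : Sym2 α}, g ∈ C i → g ∈ C i' → i = i')
    (x : ℕ) (l₀ : Fin m) (hl₀ : x ≤ w (e l₀))
    (u v : α) (hfuv : e l₀ = s(u,v))
    (bl : Fin k → Fin m)
    (Astar Bstar : Finset (Fin k))
    (hA : ∀ q ∈ Astar, q < c l₀ ∧ (Finset.univ.filter fun l : Fin m => l < l₀ ∧ c l = q).card ≠ b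
          ∧ bl q < l₀ ∧ c (bl q) = q ∧ u ∈ e (bl q) ∧ (∀ g ∈ C q, x ≤ w g → v ∉ g))
    (hB : ∀ r ∈ Bstar, bl r < l₀ ∧ c (bl r) = r ∧ e (bl r) ≠ e l₀ ∧ v ∈ e (bl r)) :
    ∀ q ∈ Astar, 1 + ((Bstar.filter (fun r => q < r)).card)
      ≤ ((C q).filter (fun g => x ≤ w g)).card := by
  classical
  intro q hq
  obtain ⟨hqlt, hqnf, hblq_lt, hblq_c, hublq, hAstar⟩ := hA q hq
  have hfb : ∀ (j : Fin m) (i : Fin k),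
      (Finset.univ.filter fun l : Fin m => l < j ∧ c l = i).card ≤ b := by
    intro j i
    refine le_trans (Finset.card_le_card_of_injOn e ?_ heinj.injOn) (hcard i)
    intro l hl
    have hcl : c l = i := (Finset.mem_filter.1 hl).2.2
    exact hcl ▸ hmemC l
  have hheavy : ∀ l : Fin m, l ≤ l₀ → x ≤ w (e l) := fun l h => le_trans hl₀ (hmono l l₀ h)
  have hedge : ∀ (l : Fin m), e l ∈ G.edgeSet := fun l =>
    SimpleGraph.mem_edgeFinset.1 (hsub _ (hmemC l))
  have hadj : G.Adj u v := by
    have := hedge l₀; rwa [hfuv, SimpleGraph.mem_edgeSet] at this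
  -- z function: other endpoint of bl r edge
  set z : Fin k → α := fun r => if h : ∃ zz, e (bl r) = s(v, zz) then h.choose else v with hzdef
  have hz : ∀ r ∈ Bstar, e (bl r) = s(v, z r) := by
    intro r hr
    have hex : ∃ zz, e (bl r) = s(v, zz) := Sym2.mem_iff_exists.1 (hB r hr).2.2.2
    simp only [hzdef, dif_pos hex]
    exact hex.choose_spec
  have hzedge : ∀ r ∈ Bstar, G.Adj v (z r) := by
    intro r hr
    have := hedge (bl r); rwa [hz r hr, SimpleGraph.mem_edgeSet] at this
  have hzne_u : ∀ r ∈ Bstar, z r ≠ u := by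
    intro r hr h
    apply (hB r hr).2.2.1
    rw [hz r hr, h, hfuv]
    exact Sym2.eq_swap
  have hblC : ∀ r ∈ Bstar, e (bl r) ∈ C r := by
    intro r hr
    have := hmemC (bl r)
    rwa [(hB r hr).2.1] at this
  -- Y function: blocker of (bl r) in class q
  set Y : Fin k → Sym2 α := fun r =>
    if h : ∃ l, l < bl r ∧ c l = q ∧ e l ≠ e (bl r) ∧ ∃ vv, vv ∈ e l ∧ vv ∈ e (bl r)
    then e h.choose else e l₀ with hYdef
  have hY : ∀ r ∈ Bstar, q < r → Y r ∈ C q ∧ x ≤ w (Y r) ∧ z r ∈ Y r := by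
    intro r hr hqr
    obtain ⟨hblr_lt, hblr_c, hblr_ne, hblr_v⟩ := hB r hr
    have hex : ∃ l, l < bl r ∧ c l = q ∧ e l ≠ e (bl r) ∧ ∃ vv, vv ∈ e l ∧ vv ∈ e (bl r) := by
      rcases hgre (bl r) q (by rw [hblr_c]; exact hqr) with hfull | h
      · exfalso
        apply hqnf
        have hsub2 : (Finset.univ.filter fun l : Fin m => l < bl r ∧ c l = q)
            ⊆ (Finset.univ.filter fun l : Fin m => l < l₀ ∧ c l = q) := by
          intro l hl
          simp only [Finset.mem_filter] at *
          exact ⟨hl.1, lt_trans hl.2.1 hblr_lt, hl.2.2⟩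
        have h1 := Finset.card_le_card hsub2
        have h2 := hfb l₀ q
        omega
      · exact h
    have hYr : Y r = e hex.choose := by simp only [hYdef, dif_pos hex]
    obtain ⟨hlt, hc, hne, vv, hvv1, hvv2⟩ := hex.choose_spec
    have hYC : Y r ∈ C q := by rw [hYr]; have := hmemC hex.choose; rwa [hc] at this
    have hYw : x ≤ w (Y r) := by rw [hYr]; exact hheavy _ (le_of_lt (lt_trans hlt hblr_lt))
    refine ⟨hYC, hYw, ?_⟩
    have hvvz : vv = v ∨ vv = z r := by
      have := hvv2
      rw [hz r hr] at this
      exact Sym2.mem_iff.1 this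
    rcases hvvz with rfl | rfl
    · exact absurd (hYr ▸ hvv1) (hAstar _ hYC hYw)
    · exact hYr ▸ hvv1
  have hYnu : ∀ r ∈ Bstar, q < r → u ∉ Y r := by
    intro r hr hqr hu
    obtain ⟨hYC, hYw, hYz⟩ := hY r hr hqr
    have hzu : u ≠ z r := Ne.symm (hzne_u r hr)
    have hYeq : Y r = s(u, z r) := (Sym2.mem_and_mem_iff hzu).1 ⟨hu, hYz⟩
    have hYedge : Y r ∈ G.edgeSet := SimpleGraph.mem_edgeFinset.1 (hsub q hYC)
    rw [hYeq, SimpleGraph.mem_edgeSet] at hYedge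
    have h1 := hbip _ _ hYedge
    have h2 := hbip _ _ (hzedge r hr)
    have h3 := hbip _ _ hadj
    tauto
  have hYinj : Set.InjOn Y (Bstar.filter (fun r => q < r)) := by
    intro r hr r' hr' heq
    simp only [Finset.coe_filter, Set.mem_setOf_eq] at hr hr'
    by_contra hne
    have hY1 := hY r hr.1 hr.2
    have hY2 := hY r' hr'.1 hr'.2
    have hzz : z r ≠ z r' := by
      intro h
      apply hne
      have hee : e (bl r) = e (bl r') := by rw [hz r hr.1, hz r' hr'.1, h]
      exact hdisjC (hblC r hr.1) (hee ▸ hblC r' hr'.1)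
    have hYeq : Y r = s(z r, z r') := (Sym2.mem_and_mem_iff hzz).1 ⟨hY1.2.2, heq ▸ hY2.2.2⟩
    have hYedge : Y r ∈ G.edgeSet := SimpleGraph.mem_edgeFinset.1 (hsub q hY1.1)
    rw [hYeq, SimpleGraph.mem_edgeSet] at hYedge
    have h1 := hbip _ _ hYedge
    have h2 := hbip _ _ (hzedge r hr.1)
    have h3 := hbip _ _ (hzedge r' hr'.1)
    tauto
  have hsubHC : insert (e (bl q)) ((Bstar.filter (fun r => q < r)).image Y)
      ⊆ (C q).filter (fun g => x ≤ w g) := by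
    intro g hg
    rcases Finset.mem_insert.1 hg with rfl | hg
    · refine Finset.mem_filter.2 ⟨?_, hheavy _ (le_of_lt hblq_lt)⟩
      have := hmemC (bl q); rwa [hblq_c] at this
    · obtain ⟨r, hr, rfl⟩ := Finset.mem_image.1 hg
      have hrm := Finset.mem_filter.1 hr
      obtain ⟨hYC, hYw, _⟩ := hY r hrm.1 hrm.2
      exact Finset.mem_filter.2 ⟨hYC, hYw⟩
  have hnotmem : e (bl q) ∉ (Bstar.filter (fun r => q < r)).image Y := by
    intro h
    obtain ⟨r, hr, heq⟩ := Finset.mem_image.1 h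
    have hrm := Finset.mem_filter.1 hr
    exact hYnu r hrm.1 hrm.2 (heq ▸ hublq)
  calc 1 + (Bstar.filter (fun r => q < r)).card
      = (insert (e (bl q)) ((Bstar.filter (fun r => q < r)).image Y)).card := by
        rw [Finset.card_insert_of_notMem hnotmem, Finset.card_image_of_injOn hYinj, Nat.add_comm]
    _ ≤ _ := Finset.card_le_card hsubHC

lemma main_count {α : Type*} [Fintype α] [DecidableEq α] (G : SimpleGraph α) [DecidableRel G.Adj]
    (U : Set α) (hbip : ∀ u v : α, G.Adj u v → (u ∈ U ↔ v ∉ U))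
    (w : Sym2 α → ℕ) (b : ℕ) (hb : 0 < b)
    (k m : ℕ) (C : Fin k → Finset (Sym2 α)) (e : Fin m → Sym2 α) (c : Fin m → Fin k)
    (hg : IsGreedyEC G w b C e c)
    (k' : ℕ) (C' : Fin k' → Finset (Sym2 α)) (hC' : IsBddProperEC G b C')
    (x : ℕ) (hx : 1 ≤ x) :
    (((Finset.univ.filter fun i : Fin k => x ≤ (C i).sup w).card : ℕ) : ℝ)
      ≤ (3 - 2 / Real.sqrt b) *
        (((Finset.univ.filter fun s : Fin k' => x ≤ (C' s).sup w).card : ℕ) : ℝ) := by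
  classical
  obtain ⟨⟨⟨hEU, hsub, hmatch⟩, hcard⟩, heinj, hrange, hmono, hmemC, hgre⟩ := hg
  obtain ⟨⟨hEU', hsub', hmatch'⟩, hcard'⟩ := hC'
  have hsqrt1 : 1 ≤ Real.sqrt b := by
    rw [show (1:ℝ) = Real.sqrt 1 by simp]
    exact Real.sqrt_le_sqrt (by exact_mod_cast hb)
  have hρ0 : (0:ℝ) ≤ 3 - 2 / Real.sqrt b := by
    have h2 : 2 / Real.sqrt b ≤ 2 := by
      rw [div_le_iff₀ (by linarith)]; nlinarith
    linarith
  set T := Finset.univ.filter fun s : Fin k' => x ≤ (C' s).sup w with hTdef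
  set Nf := Finset.univ.filter fun i : Fin k => x ≤ (C i).sup w with hNfdef
  rcases Nf.eq_empty_or_nonempty with hNe | hNe
  · rw [hNe]
    simp only [Finset.card_empty, Nat.cast_zero]
    positivity
  -- basic facts
  have hdisjC : ∀ {i i' : Fin k} {g : Sym2 α}, g ∈ C i → g ∈ C i' → i = i' := by
    intro i i' g h h'
    obtain ⟨j, hj, hun⟩ := hEU g (hsub i h)
    rw [hun i h, hun i' h']
  have hclass : ∀ (l : Fin m) (i : Fin k), e l ∈ C i → c l = i :=
    fun l i h => hdisjC (hmemC l) h
  have hxpos : 0 < x := hx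
  -- heavy edges
  set H := G.edgeFinset.filter (fun g => x ≤ w g) with hHdef
  have hHcard : H.card ≤ T.card * b := by
    have hHsub : H ⊆ T.biUnion C' := by
      intro g hg
      have hgE : g ∈ G.edgeFinset := (Finset.mem_filter.1 hg).1
      have hgw : x ≤ w g := (Finset.mem_filter.1 hg).2
      obtain ⟨s, hs, _⟩ := hEU' g hgE
      refine Finset.mem_biUnion.2 ⟨s, ?_, hs⟩
      exact Finset.mem_filter.2 ⟨Finset.mem_univ _, le_trans hgw (Finset.le_sup hs)⟩
    calc H.card ≤ (T.biUnion C').card := Finset.card_le_card hHsub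
      _ ≤ ∑ s ∈ T, (C' s).card := Finset.card_biUnion_le
      _ ≤ ∑ _s ∈ T, b := Finset.sum_le_sum (fun s _ => hcard' s)
      _ = T.card * b := by rw [Finset.sum_const, smul_eq_mul]
  have hdeg : ∀ y : α, (H.filter (fun g => y ∈ g)).card ≤ T.card := by
    intro y
    rcases (H.filter (fun g => y ∈ g)).eq_empty_or_nonempty with hE | ⟨g₀, hg₀⟩
    · simp [hE]
    · have hg₀E : g₀ ∈ G.edgeFinset :=
        (Finset.mem_filter.1 (Finset.mem_filter.1 hg₀).1).1
      obtain ⟨s₀, hs₀, _⟩ := hEU' g₀ hg₀E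
      haveI : Nonempty (Fin k') := ⟨s₀⟩
      set φ : Sym2 α → Fin k' := fun g => Classical.epsilon (fun s => g ∈ C' s) with hφdef
      apply Finset.card_le_card_of_injOn φ
      · intro g hgf
        have hgH := Finset.mem_filter.1 hgf
        have hgE : g ∈ G.edgeFinset := (Finset.mem_filter.1 hgH.1).1
        have hgw : x ≤ w g := (Finset.mem_filter.1 hgH.1).2
        obtain ⟨s, hs, _⟩ := hEU' g hgE
        have hmem' : g ∈ C' (φ g) := Classical.epsilon_spec (p := fun s => g ∈ C' s) ⟨s, hs⟩
        exact Finset.mem_filter.2 ⟨Finset.mem_univ _, le_trans hgw (Finset.le_sup hmem')⟩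
      · intro g hgf g' hgf' heq
        simp only [Finset.coe_filter, Set.mem_setOf_eq] at hgf hgf'
        have hgE : g ∈ G.edgeFinset := (Finset.mem_filter.1 hgf.1).1
        have hgE' : g' ∈ G.edgeFinset := (Finset.mem_filter.1 hgf'.1).1
        obtain ⟨s, hs, _⟩ := hEU' g hgE
        obtain ⟨s', hs', _⟩ := hEU' g' hgE'
        have hm1 : g ∈ C' (φ g) := Classical.epsilon_spec (p := fun s => g ∈ C' s) ⟨s, hs⟩
        have hm2' : g' ∈ C' (φ g') := Classical.epsilon_spec (p := fun s => g' ∈ C' s) ⟨s', hs'⟩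
        have hm2 : g' ∈ C' (φ g) := heq ▸ hm2'
        by_contra hne
        exact hmatch' (φ g) g hm1 g' hm2 hne ⟨y, hgf.2, hgf'.2⟩
  -- downward closedness
  have hdc : ∀ i i' : Fin k, i ≤ i' → i' ∈ Nf → i ∈ Nf := by
    intro i i' hle hi'
    simp only [hNfdef, Finset.mem_filter] at hi' ⊢
    refine ⟨Finset.mem_univ _, ?_⟩
    obtain ⟨g, hgC, hgw⟩ := (Finset.le_sup_iff hxpos).1 hi'.2
    obtain ⟨l, rfl⟩ := (hrange g).1 (hsub _ hgC)
    have hcl : c l = i' := hclass l i' hgC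
    rcases eq_or_lt_of_le hle with rfl | hlt
    · exact hi'.2
    · rcases hgre l i (hcl ▸ hlt) with hfull | ⟨l', hl', hcl', _, _⟩
      · have hpos : 0 < (Finset.univ.filter fun l2 : Fin m => l2 < l ∧ c l2 = i).card := by
          rw [hfull]; exact hb
        obtain ⟨l', hl'⟩ := Finset.card_pos.1 hpos
        simp only [Finset.mem_filter] at hl'
        have hmem' : e l' ∈ C i := by have := hmemC l'; rwa [hl'.2.2] at this
        exact (Finset.le_sup_iff hxpos).2 ⟨e l', hmem',
          le_trans hgw (hmono l' l (le_of_lt hl'.2.1))⟩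
      · have hmem' : e l' ∈ C i := by have := hmemC l'; rwa [hcl'] at this
        exact (Finset.le_sup_iff hxpos).2 ⟨e l', hmem',
          le_trans hgw (hmono l' l (le_of_lt hl'))⟩
  set i₀ := Nf.max' hNe with hi₀def
  have hi₀N : i₀ ∈ Nf := Nf.max'_mem hNe
  have hNfeq : Nf = Finset.univ.filter (fun i => i ≤ i₀) := by
    ext i
    simp only [Finset.mem_filter, Finset.mem_univ, true_and]
    constructor
    · intro hi; exact Nf.le_max' i hi
    · intro hi; exact hdc i i₀ hi hi₀N
  -- the heavy edge of class i₀
  have hi₀w : x ≤ (C i₀).sup w := (Finset.mem_filter.1 hi₀N).2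
  obtain ⟨g₀, hg₀C, hg₀w⟩ := (Finset.le_sup_iff hxpos).1 hi₀w
  obtain ⟨l₀, rfl⟩ := (hrange g₀).1 (hsub _ hg₀C)
  have hcl₀ : c l₀ = i₀ := hclass l₀ i₀ hg₀C
  have hrep : ∀ zz : Sym2 α, ∃ u v, zz = s(u,v) := fun zz => Sym2.ind (fun u v => ⟨u, v, rfl⟩) zz
  obtain ⟨u, v, hfuv⟩ := hrep (e l₀)
  have hadj : G.Adj u v := by
    have : e l₀ ∈ G.edgeSet := SimpleGraph.mem_edgeFinset.1 (hsub _ hg₀C)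
    rwa [hfuv, SimpleGraph.mem_edgeSet] at this
  have hune : u ≠ v := hadj.ne
  -- previous classes and their partition
  set P := Finset.univ.filter (fun q : Fin k => q < i₀) with hPdef
  set Full := P.filter
    (fun q => (Finset.univ.filter fun l : Fin m => l < l₀ ∧ c l = q).card = b) with hFulldef
  set D := P \ Full with hDdef
  have hFullP : Full ⊆ P := Finset.filter_subset _ _
  have hDmem : ∀ q ∈ D, q < i₀ ∧
      (Finset.univ.filter fun l : Fin m => l < l₀ ∧ c l = q).card ≠ b := by
    intro q hq
    have h1 := (Finset.mem_sdiff.1 hq).1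
    have h2 := (Finset.mem_sdiff.1 hq).2
    have hqlt : q < i₀ := by
      have := (Finset.mem_filter.1 h1).2; exact this
    refine ⟨hqlt, fun hcb => h2 ?_⟩
    exact Finset.mem_filter.2 ⟨h1, hcb⟩
  have hblocked : ∀ q ∈ D, ∃ l, l < l₀ ∧ c l = q ∧ e l ≠ e l₀ ∧ (u ∈ e l ∨ v ∈ e l) := by
    intro q hq
    obtain ⟨hqlt, hqnf⟩ := hDmem q hq
    rcases hgre l₀ q (by rw [hcl₀]; exact hqlt) with hfull | ⟨l, hl, hcl, hne, vv, hvv1, hvv2⟩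
    · exact absurd hfull hqnf
    · refine ⟨l, hl, hcl, hne, ?_⟩
      rw [hfuv] at hvv2
      rcases Sym2.mem_iff.1 hvv2 with rfl | rfl
      · exact Or.inl hvv1
      · exact Or.inr hvv1
  set bl : Fin k → Fin m := fun q =>
    if h : ∃ l, l < l₀ ∧ c l = q ∧ e l ≠ e l₀ ∧ (u ∈ e l ∨ v ∈ e l)
    then h.choose else l₀ with hbldef
  have hbl : ∀ q ∈ D, bl q < l₀ ∧ c (bl q) = q ∧ e (bl q) ≠ e l₀ ∧
      (u ∈ e (bl q) ∨ v ∈ e (bl q)) := by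
    intro q hq
    have hex := hblocked q hq
    simp only [hbldef, dif_pos hex]
    exact hex.choose_spec
  set A := D.filter (fun q => u ∈ e (bl q)) with hAdef
  set B := D \ A with hBdef
  have hAD : A ⊆ D := Finset.filter_subset _ _
  have hBD : B ⊆ D := Finset.sdiff_subset
  have hAB : ∀ q ∈ A, u ∈ e (bl q) ∧ v ∉ e (bl q) := by
    intro q hq
    have hu : u ∈ e (bl q) := (Finset.mem_filter.1 hq).2
    refine ⟨hu, fun hv => ?_⟩
    have heq : e (bl q) = s(u,v) := (Sym2.mem_and_mem_iff hune).1 ⟨hu, hv⟩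
    exact (hbl q (hAD hq)).2.2.1 (heq.trans hfuv.symm)
  have hBB : ∀ q ∈ B, v ∈ e (bl q) ∧ u ∉ e (bl q) := by
    intro q hq
    have hqD : q ∈ D := (Finset.mem_sdiff.1 hq).1
    have hqnA : q ∉ A := (Finset.mem_sdiff.1 hq).2
    have hnu : u ∉ e (bl q) := fun hu => hqnA (Finset.mem_filter.2 ⟨hqD, hu⟩)
    exact ⟨((hbl q hqD).2.2.2).resolve_left hnu, hnu⟩
  set Astar := A.filter (fun q => ∀ g ∈ C q, x ≤ w g → v ∉ g) with hAstardef
  set Bstar := B.filter (fun q => ∀ g ∈ C q, x ≤ w g → u ∉ g) with hBstardef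
  have hAstarA : Astar ⊆ A := Finset.filter_subset _ _
  have hBstarB : Bstar ⊆ B := Finset.filter_subset _ _
  set HC : Fin k → Finset (Sym2 α) := fun q => (C q).filter (fun g => x ≤ w g) with hHCdef
  have hheavy : ∀ l : Fin m, l ≤ l₀ → x ≤ w (e l) := fun l h => le_trans hg₀w (hmono l l₀ h)
  -- lower bound for full classes
  have hLBfull : ∀ q ∈ Full, b ≤ (HC q).card := by
    intro q hq
    have hcb : (Finset.univ.filter fun l : Fin m => l < l₀ ∧ c l = q).card = b :=
      (Finset.mem_filter.1 hq).2
    have himg : (Finset.univ.filter fun l : Fin m => l < l₀ ∧ c l = q).image e ⊆ HC q := by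
      intro g hgm
      obtain ⟨l, hl, rfl⟩ := Finset.mem_image.1 hgm
      simp only [Finset.mem_filter, Finset.mem_univ, true_and] at hl
      refine Finset.mem_filter.2 ⟨?_, hheavy l (le_of_lt hl.1)⟩
      have := hmemC l; rwa [hl.2] at this
    have := Finset.card_le_card himg
    rwa [Finset.card_image_of_injOn (heinj.injOn), hcb] at this
  -- lower bound 2 for mixed classes
  have hLBtwoA : ∀ q ∈ A \ Astar, 2 ≤ (HC q).card := by
    intro q hq
    have hqA : q ∈ A := (Finset.mem_sdiff.1 hq).1
    have hqn : q ∉ Astar := (Finset.mem_sdiff.1 hq).2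
    obtain ⟨hu, hnv⟩ := hAB q hqA
    have hnall : ¬ (∀ g ∈ C q, x ≤ w g → v ∉ g) := fun h => hqn (Finset.mem_filter.2 ⟨hqA, h⟩)
    push_neg at hnall
    obtain ⟨g, hgC, hgw, hvg⟩ := hnall
    have h1 : e (bl q) ∈ HC q := by
      refine Finset.mem_filter.2 ⟨?_, hheavy _ (le_of_lt (hbl q (hAD hqA)).1)⟩
      have := hmemC (bl q); rwa [(hbl q (hAD hqA)).2.1] at this
    have h2 : g ∈ HC q := Finset.mem_filter.2 ⟨hgC, hgw⟩
    have hne : e (bl q) ≠ g := fun h => hnv (h ▸ hvg)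
    exact Finset.one_lt_card.2 ⟨_, h1, _, h2, hne⟩
  have hLBtwoB : ∀ q ∈ B \ Bstar, 2 ≤ (HC q).card := by
    intro q hq
    have hqB : q ∈ B := (Finset.mem_sdiff.1 hq).1
    have hqn : q ∉ Bstar := (Finset.mem_sdiff.1 hq).2
    obtain ⟨hv, hnu⟩ := hBB q hqB
    have hnall : ¬ (∀ g ∈ C q, x ≤ w g → u ∉ g) := fun h => hqn (Finset.mem_filter.2 ⟨hqB, h⟩)
    push_neg at hnall
    obtain ⟨g, hgC, hgw, hug⟩ := hnall
    have h1 : e (bl q) ∈ HC q := by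
      refine Finset.mem_filter.2 ⟨?_, hheavy _ (le_of_lt (hbl q (hBD hqB)).1)⟩
      have := hmemC (bl q); rwa [(hbl q (hBD hqB)).2.1] at this
    have h2 : g ∈ HC q := Finset.mem_filter.2 ⟨hgC, hgw⟩
    have hne : e (bl q) ≠ g := fun h => hnu (h ▸ hug)
    exact Finset.one_lt_card.2 ⟨_, h1, _, h2, hne⟩
  -- cross bounds
  have hcrossA : ∀ q ∈ Astar, 1 + ((Bstar.filter (fun r => q < r)).card) ≤ (HC q).card := by
    apply aux_cross G U hbip w b C e c heinj hsub hmono hmemC hgre hcard @hdisjC x l₀ hg₀w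
      u v hfuv bl Astar Bstar
    · intro q hq
      have hqA : q ∈ A := hAstarA hq
      have hqD : q ∈ D := hAD hqA
      obtain ⟨hqlt, hqnf⟩ := hDmem q hqD
      exact ⟨by rw [hcl₀]; exact hqlt, hqnf, (hbl q hqD).1, (hbl q hqD).2.1,
        (hAB q hqA).1, (Finset.mem_filter.1 hq).2⟩
    · intro r hr
      have hrB : r ∈ B := hBstarB hr
      have hrD : r ∈ D := hBD hrB
      exact ⟨(hbl r hrD).1, (hbl r hrD).2.1, (hbl r hrD).2.2.1, (hBB r hrB).1⟩
  have hcrossB : ∀ r ∈ Bstar, 1 + ((Astar.filter (fun q => r < q)).card) ≤ (HC r).card := by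
    apply aux_cross G U hbip w b C e c heinj hsub hmono hmemC hgre hcard @hdisjC x l₀ hg₀w
      v u (by rw [hfuv]; exact Sym2.eq_swap) bl Bstar Astar
    · intro r hr
      have hrB : r ∈ B := hBstarB hr
      have hrD : r ∈ D := hBD hrB
      obtain ⟨hrlt, hrnf⟩ := hDmem r hrD
      exact ⟨by rw [hcl₀]; exact hrlt, hrnf, (hbl r hrD).1, (hbl r hrD).2.1,
        (hBB r hrB).1, (Finset.mem_filter.1 hr).2⟩
    · intro q hq
      have hqA : q ∈ A := hAstarA hq
      have hqD : q ∈ D := hAD hqA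
      exact ⟨(hbl q hqD).1, (hbl q hqD).2.1, (hbl q hqD).2.2.1, (hAB q hqA).1⟩
  have hLBi₀ : 1 ≤ (HC i₀).card :=
    Finset.card_pos.2 ⟨e l₀, Finset.mem_filter.2 ⟨hg₀C, hg₀w⟩⟩
  -- total heavy count
  have hHCdisj : ∀ q ∈ (Finset.univ.filter (fun i : Fin k => i ≤ i₀)),
      ∀ q' ∈ (Finset.univ.filter (fun i : Fin k => i ≤ i₀)), q ≠ q' → Disjoint (HC q) (HC q') := by
    intro q _ q' _ hne
    rw [Finset.disjoint_left]
    intro g hgq hgq'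
    exact hne (hdisjC (Finset.mem_filter.1 hgq).1 (Finset.mem_filter.1 hgq').1)
  have hSsum : ∑ q ∈ Finset.univ.filter (fun i : Fin k => i ≤ i₀), (HC q).card ≤ H.card := by
    rw [← Finset.card_biUnion hHCdisj]
    apply Finset.card_le_card
    intro g hgm
    obtain ⟨q, _, hgq⟩ := Finset.mem_biUnion.1 hgm
    exact Finset.mem_filter.2 ⟨hsub q (Finset.mem_filter.1 hgq).1, (Finset.mem_filter.1 hgq).2⟩
  -- split the sum
  have hi₀nP : i₀ ∉ P := by
    simp only [hPdef, Finset.mem_filter, Finset.mem_univ, true_and]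
    exact lt_irrefl i₀
  have hSins : Finset.univ.filter (fun i : Fin k => i ≤ i₀) = insert i₀ P := by
    ext q
    simp only [Finset.mem_filter, Finset.mem_univ, true_and, Finset.mem_insert, hPdef]
    rw [le_iff_lt_or_eq]
    tauto
  have eS : ∑ q ∈ Finset.univ.filter (fun i : Fin k => i ≤ i₀), (HC q).card
      = (HC i₀).card + ∑ q ∈ P, (HC q).card := by
    rw [hSins, Finset.sum_insert hi₀nP]
  have eP : ∑ q ∈ P, (HC q).card = ∑ q ∈ D, (HC q).card + ∑ q ∈ Full, (HC q).card :=
    (Finset.sum_sdiff hFullP).symm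
  have eD : ∑ q ∈ D, (HC q).card = ∑ q ∈ B, (HC q).card + ∑ q ∈ A, (HC q).card :=
    (Finset.sum_sdiff hAD).symm
  have eA : ∑ q ∈ A, (HC q).card
      = ∑ q ∈ A \ Astar, (HC q).card + ∑ q ∈ Astar, (HC q).card :=
    (Finset.sum_sdiff hAstarA).symm
  have eB : ∑ q ∈ B, (HC q).card
      = ∑ q ∈ B \ Bstar, (HC q).card + ∑ q ∈ Bstar, (HC q).card :=
    (Finset.sum_sdiff hBstarB).symm
  have bFull : Full.card * b ≤ ∑ q ∈ Full, (HC q).card := by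
    have := Finset.card_nsmul_le_sum Full (fun q => (HC q).card) b hLBfull
    simpa [smul_eq_mul] using this
  have bAm : (A \ Astar).card * 2 ≤ ∑ q ∈ A \ Astar, (HC q).card := by
    have := Finset.card_nsmul_le_sum (A \ Astar) (fun q => (HC q).card) 2 hLBtwoA
    simpa [smul_eq_mul] using this
  have bBm : (B \ Bstar).card * 2 ≤ ∑ q ∈ B \ Bstar, (HC q).card := by
    have := Finset.card_nsmul_le_sum (B \ Bstar) (fun q => (HC q).card) 2 hLBtwoB
    simpa [smul_eq_mul] using this
  have bAstar : Astar.card + ∑ q ∈ Astar, (Bstar.filter (fun r => q < r)).card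
      ≤ ∑ q ∈ Astar, (HC q).card := by
    calc Astar.card + ∑ q ∈ Astar, (Bstar.filter (fun r => q < r)).card
        = ∑ q ∈ Astar, (1 + (Bstar.filter (fun r => q < r)).card) := by
          rw [Finset.sum_add_distrib, Finset.sum_const, smul_eq_mul, mul_one]
      _ ≤ _ := Finset.sum_le_sum hcrossA
  have bBstar : Bstar.card + ∑ r ∈ Bstar, (Astar.filter (fun q => r < q)).card
      ≤ ∑ r ∈ Bstar, (HC r).card := by
    calc Bstar.card + ∑ r ∈ Bstar, (Astar.filter (fun q => r < q)).card
        = ∑ r ∈ Bstar, (1 + (Astar.filter (fun q => r < q)).card) := by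
          rw [Finset.sum_add_distrib, Finset.sum_const, smul_eq_mul, mul_one]
      _ ≤ _ := Finset.sum_le_sum hcrossB
  have hABdisj : ∀ q ∈ Astar, q ∉ Bstar := by
    intro q hq hq'
    exact (Finset.mem_sdiff.1 (hBstarB hq')).2 (hAstarA hq)
  have hpair := aux_pairs Astar Bstar hABdisj
  have hcap : Full.card * b +
      (Astar.card + Bstar.card + 2 * ((A \ Astar).card + (B \ Bstar).card)
        + Astar.card * Bstar.card + 1) ≤ T.card * b := by
    have h0 := hSsum
    rw [eS, eP, eD, eA, eB] at h0
    have h1 := le_trans h0 hHcard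
    linarith [bFull, bAm, bBm, bAstar, bBstar, hpair, hLBi₀]
  -- degree constraints
  have hdegbound : ∀ (y : α) (W : Finset (Fin k)),
      (∀ q ∈ W, ∃ g, g ∈ C q ∧ x ≤ w g ∧ y ∈ g) → W.card ≤ T.card := by
    intro y W hW
    set ψ : Fin k → Sym2 α := fun q =>
      if h : ∃ g, g ∈ C q ∧ x ≤ w g ∧ y ∈ g then h.choose else e l₀ with hψdef
    have hψspec : ∀ q ∈ W, ψ q ∈ C q ∧ x ≤ w (ψ q) ∧ y ∈ ψ q := by
      intro q hq
      have h := hW q hq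
      simp only [hψdef, dif_pos h]
      exact h.choose_spec
    refine le_trans ?_ (hdeg y)
    apply Finset.card_le_card_of_injOn ψ
    · intro q hq
      obtain ⟨h1, h2, h3⟩ := hψspec q hq
      exact Finset.mem_filter.2 ⟨Finset.mem_filter.2 ⟨hsub q h1, h2⟩, h3⟩
    · intro q hq q' hq' heq
      have h1 := (hψspec q (Finset.mem_coe.1 hq)).1
      have h2 := (hψspec q' (Finset.mem_coe.1 hq')).1
      exact hdisjC h1 (heq ▸ h2)
  have hi₀nAB : i₀ ∉ A ∪ (B \ Bstar) := by
    intro h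
    rcases Finset.mem_union.1 h with h | h
    · exact absurd (hDmem i₀ (hAD h)).1 (lt_irrefl i₀)
    · exact absurd (hDmem i₀ (hBD (Finset.mem_sdiff.1 h).1)).1 (lt_irrefl i₀)
  have hi₀nBA : i₀ ∉ B ∪ (A \ Astar) := by
    intro h
    rcases Finset.mem_union.1 h with h | h
    · exact absurd (hDmem i₀ (hBD h)).1 (lt_irrefl i₀)
    · exact absurd (hDmem i₀ (hAD (Finset.mem_sdiff.1 h).1)).1 (lt_irrefl i₀)
  have hdisjAB2 : Disjoint A (B \ Bstar) := by
    rw [Finset.disjoint_left]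
    intro q hq hq'
    exact (Finset.mem_sdiff.1 ((Finset.mem_sdiff.1 hq').1)).2 hq
  have hdisjBA2 : Disjoint B (A \ Astar) := by
    rw [Finset.disjoint_left]
    intro q hq hq'
    exact (Finset.mem_sdiff.1 hq).2 (Finset.mem_sdiff.1 hq').1
  have hU : A.card + (B \ Bstar).card + 1 ≤ T.card := by
    have := hdegbound u (insert i₀ (A ∪ (B \ Bstar))) ?_
    · rwa [Finset.card_insert_of_notMem hi₀nAB, Finset.card_union_of_disjoint hdisjAB2] at this
    intro q hq
    rcases Finset.mem_insert.1 hq with rfl | hq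
    · exact ⟨e l₀, hg₀C, hg₀w, by rw [hfuv]; exact Sym2.mem_iff.2 (Or.inl rfl)⟩
    rcases Finset.mem_union.1 hq with hqA | hqB
    · have hqD := hAD hqA
      refine ⟨e (bl q), ?_, hheavy _ (le_of_lt (hbl q hqD).1), (hAB q hqA).1⟩
      have := hmemC (bl q); rwa [(hbl q hqD).2.1] at this
    · have hqB' : q ∈ B := (Finset.mem_sdiff.1 hqB).1
      have hnall : ¬(∀ g ∈ C q, x ≤ w g → u ∉ g) :=
        fun h => (Finset.mem_sdiff.1 hqB).2 (Finset.mem_filter.2 ⟨hqB', h⟩)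
      push_neg at hnall
      obtain ⟨g, h1, h2, h3⟩ := hnall
      exact ⟨g, h1, h2, h3⟩
  have hV : B.card + (A \ Astar).card + 1 ≤ T.card := by
    have := hdegbound v (insert i₀ (B ∪ (A \ Astar))) ?_
    · rwa [Finset.card_insert_of_notMem hi₀nBA, Finset.card_union_of_disjoint hdisjBA2] at this
    intro q hq
    rcases Finset.mem_insert.1 hq with rfl | hq
    · exact ⟨e l₀, hg₀C, hg₀w, by rw [hfuv]; exact Sym2.mem_iff.2 (Or.inr rfl)⟩
    rcases Finset.mem_union.1 hq with hqB | hqA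
    · have hqD := hBD hqB
      refine ⟨e (bl q), ?_, hheavy _ (le_of_lt (hbl q hqD).1), (hBB q hqB).1⟩
      have := hmemC (bl q); rwa [(hbl q hqD).2.1] at this
    · have hqA' : q ∈ A := (Finset.mem_sdiff.1 hqA).1
      have hnall : ¬(∀ g ∈ C q, x ≤ w g → v ∉ g) :=
        fun h => (Finset.mem_sdiff.1 hqA).2 (Finset.mem_filter.2 ⟨hqA', h⟩)
      push_neg at hnall
      obtain ⟨g, h1, h2, h3⟩ := hnall
      exact ⟨g, h1, h2, h3⟩
  -- cardinal bookkeeping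
  have hk1 : Nf.card = i₀.val + 1 := by
    rw [hNfeq, show Finset.univ.filter (fun i : Fin k => i ≤ i₀) = Finset.Iic i₀ by
      ext q; simp]
    exact Fin.card_Iic i₀
  have hk2 : P.card = i₀.val := by
    rw [show P = Finset.Iio i₀ by ext q; simp [hPdef]]
    exact Fin.card_Iio i₀
  have hk3 : D.card + Full.card = P.card := Finset.card_sdiff_add_card_eq_card hFullP
  have hk4 : B.card + A.card = D.card := Finset.card_sdiff_add_card_eq_card hAD
  have hk5 : (A \ Astar).card + Astar.card = A.card := Finset.card_sdiff_add_card_eq_card hAstarA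
  have hk6 : (B \ Bstar).card + Bstar.card = B.card := Finset.card_sdiff_add_card_eq_card hBstarB
  exact aux_arith b T.card Astar.card Bstar.card ((A \ Astar).card + (B \ Bstar).card)
    Full.card Nf.card hb (by omega) hcap (by omega) (by omega)

end AuxGreedyEC

/-- The total weight of every greedy (first-fit) `b`-bounded edge coloring of a bipartite
graph `G` is at most `(3 − 2/√b)` times the total weight of every `b`-bounded proper edge
coloring of `G` (in particular, at most `(3 − 2/√b)·OPT`). -/
theorem stmt_10 {α : Type*} [Fintype α] [DecidableEq α] (G : SimpleGraph α) [DecidableRel G.Adj]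
    (U : Set α) (hbip : ∀ u v : α, G.Adj u v → (u ∈ U ↔ v ∉ U))
    (w : Sym2 α → ℕ) (b : ℕ) (hb : 0 < b)
    (k m : ℕ) (C : Fin k → Finset (Sym2 α)) (e : Fin m → Sym2 α) (c : Fin m → Fin k)
    (hg : IsGreedyEC G w b C e c) :
    ∀ (k' : ℕ) (C' : Fin k' → Finset (Sym2 α)), IsBddProperEC G b C' →
      (∑ i, (((C i).sup w : ℕ) : ℝ)) ≤ (3 - 2 / Real.sqrt b) * ∑ i, (((C' i).sup w : ℕ) : ℝ) := by
  classical
  intro k' C' hC'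
  have hsubC : ∀ i, C i ⊆ G.edgeFinset := hg.1.1.2.1
  have hsubC' : ∀ s, C' s ⊆ G.edgeFinset := hC'.1.2.1
  set M := G.edgeFinset.sup w with hMdef
  have hMC : ∀ i, (C i).sup w ≤ M := fun i => Finset.sup_mono (hsubC i)
  have hMC' : ∀ s, (C' s).sup w ≤ M := fun s => Finset.sup_mono (hsubC' s)
  have hL := aux_sum_levels (fun i : Fin k => (C i).sup w) M hMC
  have hR := aux_sum_levels (fun s : Fin k' => (C' s).sup w) M hMC'
  calc (∑ i, (((C i).sup w : ℕ) : ℝ))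
      = ((∑ i, (C i).sup w : ℕ) : ℝ) := by push_cast; ring
    _ = ((∑ x ∈ Finset.Icc 1 M,
          (Finset.univ.filter fun i : Fin k => x ≤ (C i).sup w).card : ℕ) : ℝ) := by
        rw [hL]
    _ = ∑ x ∈ Finset.Icc 1 M,
          (((Finset.univ.filter fun i : Fin k => x ≤ (C i).sup w).card : ℕ) : ℝ) := by
        push_cast; ring
    _ ≤ ∑ x ∈ Finset.Icc 1 M, (3 - 2 / Real.sqrt b) *
          (((Finset.univ.filter fun s : Fin k' => x ≤ (C' s).sup w).card : ℕ) : ℝ) := by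
        apply Finset.sum_le_sum
        intro x hxm
        exact main_count G U hbip w b hb k m C e c hg k' C' hC' x (Finset.mem_Icc.1 hxm).1
    _ = (3 - 2 / Real.sqrt b) * ∑ x ∈ Finset.Icc 1 M,
          (((Finset.univ.filter fun s : Fin k' => x ≤ (C' s).sup w).card : ℕ) : ℝ) := by
        rw [Finset.mul_sum]
    _ = (3 - 2 / Real.sqrt b) * ∑ i, (((C' i).sup w : ℕ) : ℝ) := by
        congr 1
        rw [show (∑ i, (((C' i).sup w : ℕ) : ℝ)) = ((∑ s, (C' s).sup w : ℕ) : ℝ) by push_cast; ring,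
          hR]
        push_cast; ring
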